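/- For c ∈ (0,1] and integer α ≥ 2, the quantum protocol with fidelity density f^{pf}(F) = 1/√(c(2F−2+c)) on [(2−c)/2, 1] is successful according to W_{α,1} whenever c is sufficiently small; in particular, for the average-based criterion (α = 2), γ_{W_{2,1}}(f^{pf}) = 2(1 − c/3 − 2/3) = 2(1/3 − c/3) > 0 for all c ∈ (0,1). -/

import Mathlib

open MeasureTheory Set

/-- Phase-flip fidelity density. -/
noncomputable def fPf (c F : ℝ) : ℝ := 1 / Real.sqrt (c * (2 * F - 2 + c))

/-- Certification functional γ_{W_{α,1}} for the phase-flip protocol: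
the W-weighted score of f^pf (supported on [(2−c)/2, 1]) minus that of the
optimal classical density 2F on [0,1]. -/
noncomputable def gammaPf (α : ℕ) (c : ℝ) : ℝ :=
  (∫ F in ((2 - c) / 2)..1, (α : ℝ) * F ^ (α - 1) * fPf c F) -
    ∫ F in (0 : ℝ)..1, (α : ℝ) * F ^ (α - 1) * (2 * F)

lemma fPf_nonneg (c F : ℝ) : 0 ≤ fPf c F :=
  div_nonneg zero_le_one (Real.sqrt_nonneg _)

lemma fPf_eq_rpow {c : ℝ} (hc : 0 < c) {F : ℝ} (hF : (2 - c) / 2 ≤ F) :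
    fPf c F = (Real.sqrt (2 * c))⁻¹ * (F - (2 - c) / 2) ^ (-(1/2) : ℝ) := by
  have h0 : 0 ≤ F - (2 - c) / 2 := by linarith
  have hu : c * (2 * F - 2 + c) = (2 * c) * (F - (2 - c) / 2) := by ring
  rw [fPf, one_div, hu, Real.sqrt_mul (by positivity), mul_inv,
    Real.sqrt_eq_rpow (F - (2 - c) / 2), ← Real.rpow_neg h0]

lemma fPf_measurable (c : ℝ) : Measurable (fPf c) := by
  unfold fPf
  simp only [one_div]
  exact (Real.continuous_sqrt.measurable.comp (by fun_prop)).inv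

/-- Integrability of the phase-flip density. -/
lemma int_fPf {c : ℝ} (hc : 0 < c) (hc1 : c ≤ 1) :
    IntervalIntegrable (fPf c) volume ((2 - c) / 2) 1 := by
  have ha1 : (2 - c) / 2 ≤ 1 := by linarith
  have h1 : IntervalIntegrable (fun x : ℝ => x ^ (-(1/2) : ℝ)) volume 0 (1 - (2 - c) / 2) :=
    intervalIntegral.intervalIntegrable_rpow' (by norm_num)
  have h2 : IntervalIntegrable (fun x : ℝ => (x - (2 - c) / 2) ^ (-(1/2) : ℝ)) volume
      ((2 - c) / 2) 1 := by
    simpa using h1.comp_sub_right ((2 - c) / 2)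
  have h3 := h2.const_mul (Real.sqrt (2 * c))⁻¹
  rw [intervalIntegrable_iff_integrableOn_Ioc_of_le ha1] at h3 ⊢
  exact h3.congr_fun (fun x hx => (fPf_eq_rpow hc hx.1.le).symm) measurableSet_Ioc

/-- Integrability of the weighted phase-flip density. -/
lemma int_pow_fPf {c : ℝ} (hc : 0 < c) (hc1 : c ≤ 1) (α : ℕ) :
    IntervalIntegrable (fun F => (α : ℝ) * F ^ (α - 1) * fPf c F) volume ((2 - c) / 2) 1 := by
  have ha1 : (2 - c) / 2 ≤ 1 := by linarith
  have ha0 : (0 : ℝ) ≤ (2 - c) / 2 := by linarith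
  refine ((int_fPf hc hc1).const_mul (α : ℝ)).mono_fun ?_ ?_
  · exact (((measurable_const.mul (measurable_id.pow_const _)).mul
      (fPf_measurable c))).aestronglyMeasurable
  · rw [Set.uIoc_of_le ha1, Filter.EventuallyLE, ae_restrict_iff' measurableSet_Ioc]
    filter_upwards with x hx
    have hx0 : 0 ≤ x := le_trans ha0 hx.1.le
    have hpow : x ^ (α - 1) ≤ 1 := pow_le_one₀ hx0 hx.2
    have hf := fPf_nonneg c x
    have hα : (0 : ℝ) ≤ (α : ℝ) := Nat.cast_nonneg α
    simp only [Real.norm_eq_abs]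
    rw [abs_of_nonneg (by positivity), abs_of_nonneg (by positivity)]
    have h2 : (α : ℝ) * x ^ (α - 1) * fPf c x ≤ (α : ℝ) * 1 * fPf c x :=
      mul_le_mul_of_nonneg_right (mul_le_mul_of_nonneg_left hpow hα) hf
    linarith

/-- The phase-flip density integrates to 1. -/
lemma integral_fPf {c : ℝ} (hc : 0 < c) (hc1 : c ≤ 1) :
    ∫ F in ((2 - c) / 2)..1, fPf c F = 1 := by
  have ha1 : (2 - c) / 2 ≤ 1 := by linarith
  have key : ∫ F in ((2 - c) / 2)..1, fPf c F =
      (fun F => Real.sqrt (c * (2 * F - 2 + c)) / c) 1 -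
      (fun F => Real.sqrt (c * (2 * F - 2 + c)) / c) ((2 - c) / 2) := by
    refine intervalIntegral.integral_eq_sub_of_hasDerivAt_of_le (E := ℝ)
      (f := fun F => Real.sqrt (c * (2 * F - 2 + c)) / c) (f' := fPf c) ha1 ?_ ?_ ?_
    · exact ((Real.continuous_sqrt.comp (by fun_prop)).div_const c).continuousOn
    · intro F hF
      have hu0 : 0 < c * (2 * F - 2 + c) := by
        have : (2 - c) / 2 < F := hF.1
        nlinarith
      have hu : HasDerivAt (fun F : ℝ => c * (2 * F - 2 + c)) (c * 2) F := by
        simpa using ((((hasDerivAt_id F).const_mul 2).sub_const 2).add_const c).const_mul c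
      have hs := (Real.hasDerivAt_sqrt hu0.ne').comp F hu
      have h := hs.div_const c
      convert h using 1
      · rfl
      · rfl
      have hsne : Real.sqrt (c * (2 * F - 2 + c)) ≠ 0 := by positivity
      rw [fPf, div_mul_eq_mul_div, one_mul, div_div,
        eq_div_iff (by positivity : 2 * Real.sqrt (c * (2 * F - 2 + c)) * c ≠ 0)]
      rw [one_div, inv_mul_eq_div, div_eq_iff hsne]
      ring
    · exact int_fPf hc hc1
  rw [key]
  simp only
  have h1 : c * (2 * 1 - 2 + c) = c * c := by ring
  have h2 : c * (2 * ((2 - c) / 2) - 2 + c) = 0 := by ring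
  rw [h1, h2, Real.sqrt_mul_self hc.le, Real.sqrt_zero]
  field_simp
  ring

/-- Exact value of the α = 2 score of the phase-flip density. -/
lemma integral_two_fPf {c : ℝ} (hc : 0 < c) (hc1 : c ≤ 1) :
    ∫ F in ((2 - c) / 2)..1, 2 * F * fPf c F = 2 - 2 * c / 3 := by
  have ha1 : (2 - c) / 2 ≤ 1 := by linarith
  set G : ℝ → ℝ := fun F => (c * (2 * F - 2 + c)) * Real.sqrt (c * (2 * F - 2 + c)) / (3 * c ^ 2)
      + (2 - c) * Real.sqrt (c * (2 * F - 2 + c)) / c with hG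
  have hint : IntervalIntegrable (fun F => 2 * F * fPf c F) volume ((2 - c) / 2) 1 := by
    have := int_pow_fPf hc hc1 2
    simpa using this
  have key : ∫ F in ((2 - c) / 2)..1, 2 * F * fPf c F = G 1 - G ((2 - c) / 2) := by
    refine intervalIntegral.integral_eq_sub_of_hasDerivAt_of_le (E := ℝ) (f := G)
      (f' := fun F => 2 * F * fPf c F) ha1 ?_ ?_ ?_
    · apply Continuous.continuousOn
      fun_prop
    · intro F hF
      have hu0 : 0 < c * (2 * F - 2 + c) := by
        have : (2 - c) / 2 < F := hF.1
        nlinarith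
      have hsne : Real.sqrt (c * (2 * F - 2 + c)) ≠ 0 := by positivity
      have hu : HasDerivAt (fun F : ℝ => c * (2 * F - 2 + c)) (c * 2) F := by
        simpa using ((((hasDerivAt_id F).const_mul 2).sub_const 2).add_const c).const_mul c
      have hs : HasDerivAt (fun F : ℝ => Real.sqrt (c * (2 * F - 2 + c)))
          (1 / (2 * Real.sqrt (c * (2 * F - 2 + c))) * (c * 2)) F :=
        (Real.hasDerivAt_sqrt hu0.ne').comp F hu
      have h1 := ((hu.mul hs).div_const (3 * c ^ 2)).add ((hs.const_mul (2 - c)).div_const c)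
      convert h1 using 1
      · rfl
      have hsq : Real.sqrt (c * (2 * F - 2 + c)) ^ 2 = c * (2 * F - 2 + c) :=
        Real.sq_sqrt hu0.le
      simp only [fPf]
      set s := Real.sqrt (c * (2 * F - 2 + c)) with hs_def
      clear_value s
      rw [show c * (2 * F - 2 + c) = s ^ 2 from hsq.symm]
      field_simp
      linear_combination (-3) * hsq
    · exact hint
  rw [key, hG]
  simp only
  have h1 : c * (2 * 1 - 2 + c) = c * c := by ring
  have h2 : c * (2 * ((2 - c) / 2) - 2 + c) = 0 := by ring
  rw [h1, h2, Real.sqrt_mul_self hc.le, Real.sqrt_zero]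
  field_simp
  ring

/-- The classical score. -/
lemma classical_int (α : ℕ) (hα : 1 ≤ α) :
    ∫ F in (0:ℝ)..1, (α : ℝ) * F ^ (α - 1) * (2 * F) = 2 * α / (α + 1) := by
  have h : ∀ F : ℝ, (α : ℝ) * F ^ (α - 1) * (2 * F) = (2 * α) * F ^ α := by
    intro F
    have : F ^ (α - 1) * F = F ^ α := by
      rw [← pow_succ, Nat.sub_add_cancel hα]
    calc (α : ℝ) * F ^ (α - 1) * (2 * F) = (2 * α) * (F ^ (α - 1) * F) := by ring
    _ = (2 * α) * F ^ α := by rw [this]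
  simp_rw [h]
  rw [intervalIntegral.integral_const_mul, integral_pow]
  simp [div_eq_mul_inv]

/-- Lower bound for the W_{α,1} score of the phase-flip density. -/
lemma score_lower_bound {c : ℝ} (hc : 0 < c) (hc1 : c ≤ 1) (α : ℕ) :
    (α : ℝ) * ((2 - c) / 2) ^ (α - 1) ≤
      ∫ F in ((2 - c) / 2)..1, (α : ℝ) * F ^ (α - 1) * fPf c F := by
  have ha1 : (2 - c) / 2 ≤ 1 := by linarith
  have ha0 : (0 : ℝ) ≤ (2 - c) / 2 := by linarith
  have hmono := intervalIntegral.integral_mono_on (μ := volume)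
    (f := fun F => ((α : ℝ) * ((2 - c) / 2) ^ (α - 1)) * fPf c F)
    (g := fun F => (α : ℝ) * F ^ (α - 1) * fPf c F) ha1
    ((int_fPf hc hc1).const_mul _) (int_pow_fPf hc hc1 α) ?_
  · calc (α : ℝ) * ((2 - c) / 2) ^ (α - 1)
        = ((α : ℝ) * ((2 - c) / 2) ^ (α - 1)) * ∫ F in ((2 - c) / 2)..1, fPf c F := by
          rw [integral_fPf hc hc1, mul_one]
    _ = ∫ F in ((2 - c) / 2)..1, ((α : ℝ) * ((2 - c) / 2) ^ (α - 1)) * fPf c F := by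
          rw [intervalIntegral.integral_const_mul]
    _ ≤ _ := hmono
  · intro x hx
    have h1 : ((2 - c) / 2) ^ (α - 1) ≤ x ^ (α - 1) := pow_le_pow_left₀ ha0 hx.1 _
    have h2 := fPf_nonneg c x
    have hα : (0 : ℝ) ≤ (α : ℝ) := Nat.cast_nonneg α
    exact mul_le_mul_of_nonneg_right (mul_le_mul_of_nonneg_left h1 hα) h2

/-- For every integer α ≥ 2 the phase-flip protocol is successful according to
W_{α,1} whenever c is sufficiently small; in particular for α = 2,
γ = 2(1/3 − c/3) > 0 for all c ∈ (0,1). -/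
theorem phase_flip_certification :
    (∀ α : ℕ, 2 ≤ α → ∃ c₀ > (0 : ℝ), ∀ c : ℝ, 0 < c → c ≤ 1 → c < c₀ →
      0 < gammaPf α c) ∧
    (∀ c : ℝ, 0 < c → c < 1 →
      gammaPf 2 c = 2 * (1 / 3 - c / 3) ∧ 0 < gammaPf 2 c) := by
  constructor
  · intro α hα
    refine ⟨2 / ((α : ℝ) + 1), by positivity, fun c hc hc1 hcc₀ => ?_⟩
    have hA : (2 : ℝ) ≤ (α : ℝ) := by exact_mod_cast hα
    have hA1 : (0 : ℝ) < (α : ℝ) + 1 := by linarith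
    -- Bernoulli bound
    have hcast : ((α - 1 : ℕ) : ℝ) = (α : ℝ) - 1 := by
      rw [Nat.cast_sub (by omega)]; simp
    have hbern : 1 + ((α : ℝ) - 1) * (-(c / 2)) ≤ ((2 - c) / 2) ^ (α - 1) := by
      have := one_add_mul_le_pow (a := -(c / 2)) (by linarith) (α - 1)
      rw [hcast] at this
      convert this using 2
      · rfl
      ring
    have hscore := score_lower_bound hc hc1 α
    have hclass := classical_int α (by omega)
    rw [gammaPf, hclass]
    have hkey : 2 * (α : ℝ) / ((α : ℝ) + 1) < (α : ℝ) * ((2 - c) / 2) ^ (α - 1) := by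
      have h1 : 2 * (α : ℝ) / ((α : ℝ) + 1) < (α : ℝ) * (1 + ((α : ℝ) - 1) * (-(c / 2))) := by
        rw [div_lt_iff₀ hA1]
        have hcb : c * ((α : ℝ) + 1) < 2 := by
          have := (lt_div_iff₀ hA1).mp hcc₀
          linarith
        have hfact : 0 < ((α : ℝ) - 1) * (1 - ((α : ℝ) + 1) * c / 2) := by
          apply mul_pos <;> nlinarith
        nlinarith [mul_pos (show (0:ℝ) < (α : ℝ) by linarith) hfact]
      calc 2 * (α : ℝ) / ((α : ℝ) + 1)
          < (α : ℝ) * (1 + ((α : ℝ) - 1) * (-(c / 2))) := h1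
        _ ≤ (α : ℝ) * ((2 - c) / 2) ^ (α - 1) :=
            mul_le_mul_of_nonneg_left hbern (by linarith)
    linarith
  · intro c hc hc1
    have hc1' : c ≤ 1 := hc1.le
    have h2int : ∫ F in ((2 - c) / 2)..1, ((2 : ℕ) : ℝ) * F ^ (2 - 1) * fPf c F
        = 2 - 2 * c / 3 := by
      rw [← integral_two_fPf hc hc1']
      congr 1
      ext F
      norm_num
    have hcl : ∫ F in (0:ℝ)..1, ((2 : ℕ) : ℝ) * F ^ (2 - 1) * (2 * F) = 4 / 3 := by
      rw [classical_int 2 (by omega)]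
      norm_num
    have : gammaPf 2 c = 2 * (1 / 3 - c / 3) := by
      rw [gammaPf, h2int, hcl]
      ring
    exact ⟨this, by rw [this]; linarith⟩
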